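/- Let CB(L) be the collection of nonempty closed bounded convex subsets of a Banach space L. The relation (A,B) ∼ (C,D) if and only if closure(A + D) = closure(B + C) is an equivalence relation on CB(L) × CB(L). -/

import Mathlib

open Pointwise

private lemma add_subset_closure_add {L : Type*} [NormedAddCommGroup L]
    {s t : Set L} : closure s + closure t ⊆ closure (s + t) := by
  rintro _ ⟨b, hb, c, hc, rfl⟩
  exact map_mem_closure₂ continuous_add hb hc fun a ha b hb => Set.add_mem_add ha hb

private lemma closure_add_left {L : Type*} [NormedAddCommGroup L]
    (s t : Set L) : closure (closure s + t) = closure (s + t) := by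
  apply subset_antisymm
  · have : closure s + t ⊆ closure (s + t) := by
      intro a ha
      exact add_subset_closure_add (Set.add_subset_add subset_rfl subset_closure ha)
    simpa using closure_mono this
  · exact closure_mono (Set.add_subset_add subset_closure subset_rfl)

private lemma radstrom_cancel {L : Type*} [NormedAddCommGroup L] [NormedSpace ℝ L]
    {X Y S : Set L} (hY : Convex ℝ Y) (hYc : IsClosed Y)
    (hSne : S.Nonempty) (hSb : Bornology.IsBounded S)
    (h : closure (X + S) ⊆ closure (Y + S)) : X ⊆ Y := by
  obtain ⟨M, hM⟩ := Metric.isBounded_iff.mp hSb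
  obtain ⟨s₀, hs₀⟩ := hSne
  have hM0 : 0 ≤ M := le_trans dist_nonneg (hM hs₀ hs₀)
  intro x hx
  rw [← hYc.closure_eq, Metric.mem_closure_iff]
  intro ε hε
  have step : ∀ s ∈ S, ∃ y ∈ Y, ∃ s' ∈ S, ‖x + s - (y + s')‖ < ε / 2 := by
    intro s hs
    have hxs : x + s ∈ closure (Y + S) := h (subset_closure (Set.add_mem_add hx hs))
    rw [Metric.mem_closure_iff] at hxs
    obtain ⟨z, hz, hd⟩ := hxs (ε / 2) (by positivity)
    obtain ⟨y, hy, s', hs', rfl⟩ := hz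
    exact ⟨y, hy, s', hs', by simpa [dist_eq_norm] using hd⟩
  choose! yf hyf sf hsf hnf using step
  set seq : ℕ → L := fun n => Nat.rec s₀ (fun _ s => sf s) n with hseqdef
  have hseq : ∀ n, seq n ∈ S := by
    intro n
    induction n with
    | zero => exact hs₀
    | succ n ih => exact hsf _ ih
  set y : ℕ → L := fun n => yf (seq n) with hydef
  have hyY : ∀ n, y n ∈ Y := fun n => hyf _ (hseq n)
  have hstep : ∀ n, ‖x - y n - (seq (n + 1) - seq n)‖ < ε / 2 := by
    intro n
    have := hnf _ (hseq n)
    have heq : x + seq n - (y n + seq (n + 1)) = x - y n - (seq (n + 1) - seq n) := by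
      abel
    rwa [heq] at this
  have key : ∀ n : ℕ, ‖(n : ℝ) • x - (∑ i ∈ Finset.range n, y i) - (seq n - seq 0)‖
      ≤ n * (ε / 2) := by
    intro n
    have hsum : ∑ i ∈ Finset.range n, (x - y i - (seq (i + 1) - seq i))
        = (n : ℝ) • x - (∑ i ∈ Finset.range n, y i) - (seq n - seq 0) := by
      rw [Finset.sum_sub_distrib, Finset.sum_sub_distrib, Finset.sum_range_sub,
        Finset.sum_const, Finset.card_range, ← Nat.cast_smul_eq_nsmul ℝ]
    rw [← hsum]
    calc ‖∑ i ∈ Finset.range n, (x - y i - (seq (i + 1) - seq i))‖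
        ≤ ∑ i ∈ Finset.range n, ‖x - y i - (seq (i + 1) - seq i)‖ :=
          norm_sum_le _ _
      _ ≤ ∑ _i ∈ Finset.range n, (ε / 2) :=
          Finset.sum_le_sum fun i _ => (hstep i).le
      _ = n * (ε / 2) := by simp [mul_comm]
  obtain ⟨n, hn⟩ := exists_nat_gt (max 1 (2 * M / ε))
  have hn1 : (1 : ℝ) < n := lt_of_le_of_lt (le_max_left _ _) hn
  have hn0 : (0 : ℝ) < n := by linarith
  have hnn : 0 < n := by exact_mod_cast hn0
  have hMn : M / n < ε / 2 := by
    rw [div_lt_iff₀ hn0]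
    have h2 : 2 * M / ε < n := lt_of_le_of_lt (le_max_right _ _) hn
    rw [div_lt_iff₀ hε] at h2
    linarith
  refine ⟨(n : ℝ)⁻¹ • ∑ i ∈ Finset.range n, y i, ?_, ?_⟩
  · have := hY.sum_mem (t := Finset.range n) (w := fun _ => (n : ℝ)⁻¹) (z := y)
      (fun i _ => by positivity) (by simp [Finset.card_range, mul_inv_cancel₀ hn0.ne']) 
      (fun i _ => hyY i)
    simpa [← Finset.smul_sum] using this
  · have hxy : x - (n : ℝ)⁻¹ • ∑ i ∈ Finset.range n, y i
        = (n : ℝ)⁻¹ • (((n : ℝ) • x - (∑ i ∈ Finset.range n, y i) - (seq n - seq 0))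
          + (seq n - seq 0)) := by
      rw [smul_add, smul_sub, smul_sub, smul_smul, inv_mul_cancel₀ hn0.ne', one_smul]
      abel
    rw [dist_eq_norm, hxy, norm_smul]
    have hd : ‖seq n - seq 0‖ ≤ M := by
      rw [← dist_eq_norm]
      exact hM (hseq n) (hseq 0)
    calc ‖(n : ℝ)⁻¹‖ * ‖_ + (seq n - seq 0)‖
        ≤ (n : ℝ)⁻¹ * (n * (ε / 2) + M) := by
          rw [norm_inv, Real.norm_natCast]
          gcongr
          exact le_trans (norm_add_le _ _) (add_le_add (key n) hd)
      _ = ε / 2 + M / n := by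
          field_simp
      _ < ε := by linarith

/-- On `CB(L) × CB(L)`, where `CB(L)` is the collection of nonempty closed bounded
convex subsets of a Banach space `L`, the relation
`(A,B) ∼ (C,D) ↔ closure (A + D) = closure (B + C)` is an equivalence relation. -/
theorem radstrom_relation_equivalence {L : Type*} [NormedAddCommGroup L]
    [NormedSpace ℝ L] [CompleteSpace L] :
    Equivalence (fun p q : {A : Set L // A.Nonempty ∧ IsClosed A ∧
        Bornology.IsBounded A ∧ Convex ℝ A} ×
        {A : Set L // A.Nonempty ∧ IsClosed A ∧ Bornology.IsBounded A ∧ Convex ℝ A} =>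
      closure ((p.1 : Set L) + (q.2 : Set L)) =
        closure ((p.2 : Set L) + (q.1 : Set L))) := by
  constructor
  · rintro ⟨A, B⟩
    simp [add_comm]
  · rintro ⟨A, B⟩ ⟨C, D⟩ h
    dsimp only at h ⊢
    rw [add_comm (C : Set L), add_comm (D : Set L), ← h]
  · rintro ⟨A, B⟩ ⟨C, D⟩ ⟨E, F⟩ h1 h2
    dsimp only at h1 h2 ⊢
    obtain ⟨hAne, hAc, hAb, hAv⟩ := A.2
    obtain ⟨hBne, hBc, hBb, hBv⟩ := B.2
    obtain ⟨hCne, hCc, hCb, hCv⟩ := C.2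
    obtain ⟨hDne, hDc, hDb, hDv⟩ := D.2
    obtain ⟨hEne, hEc, hEb, hEv⟩ := E.2
    obtain ⟨hFne, hFc, hFb, hFv⟩ := F.2
    set S : Set L := (C : Set L) + (D : Set L) with hS
    have hSne : S.Nonempty := hCne.add hDne
    have hSb : Bornology.IsBounded S := hCb.add hDb
    have hkey : closure ((A : Set L) + (F : Set L) + S)
        = closure ((B : Set L) + (E : Set L) + S) := by
      have e1 : (A : Set L) + (F : Set L) + S = (A : Set L) + (D : Set L) + ((C : Set L) + (F : Set L)) := by
        rw [hS]; abel_nf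
      have e2 : (B : Set L) + (E : Set L) + S = (B : Set L) + (C : Set L) + ((D : Set L) + (E : Set L)) := by
        rw [hS]; abel_nf
      rw [e1, e2, ← closure_add_left, h1, closure_add_left,
        add_comm ((B : Set L) + (C : Set L)) ((C : Set L) + (F : Set L)),
        add_comm ((B : Set L) + (C : Set L)) ((D : Set L) + (E : Set L)),
        ← closure_add_left ((C : Set L) + (F : Set L)), h2, closure_add_left]
    have main : ∀ {U V : Set L}, V.Nonempty → Convex ℝ V →
        closure (U + S) = closure (V + S) → closure U ⊆ closure V := by
      intro U V hVne hVv hUV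
      refine radstrom_cancel (hVv.closure) isClosed_closure hSne hSb ?_
      rw [closure_add_left, closure_add_left, hUV]
    refine subset_antisymm
      (main (hBne.add hEne) (hBv.add hEv) hkey)
      (main (hAne.add hFne) (hAv.add hFv) hkey.symm)
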